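/- For every u ∈ ℂ with Re u ≤ 0, the Laplace/characteristic transform of the Bessel distribution μ_{α,β} satisfies ∫_{[0,∞)} e^{ux} μ_{α,β}(dx) = exp(αu/(β - u)). -/

import Mathlib

open MeasureTheory ENNReal

/-- Modified Bessel function of the first kind of order 1. -/
noncomputable def besselI1 (r : ℝ) : ℝ :=
  (r / 2) * ∑' k : ℕ, (r ^ 2 / 4) ^ k / (Nat.factorial k * Nat.factorial (k + 1))

/-- The Bessel distribution with parameters `α, β > 0`. -/
noncomputable def besselMeasure (α β : ℝ) : Measure ℝ :=
  (ENNReal.ofReal (Real.exp (-α)) • (Measure.dirac (0 : ℝ))) +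
    (volume.restrict (Set.Ioi (0 : ℝ))).withDensity
      (fun x => ENNReal.ofReal
        (β * Real.exp (-α - β * x) * Real.sqrt (α / (β * x)) *
          besselI1 (2 * Real.sqrt (α * β * x))))


open Set Filter Topology NNReal


lemma tpme {b : ℝ} (hb : 0 < b) (n : ℕ) :
    Tendsto (fun x : ℝ ↦ x ^ n * Real.exp (-b * x)) atTop (𝓝 0) := by
  have h := (Real.tendsto_pow_mul_exp_neg_atTop_nhds_zero n).comp
    (tendsto_id.const_mul_atTop hb)
  have := h.const_mul ((1/b) ^ n)
  rw [mul_zero] at this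
  refine this.congr fun x => ?_
  simp only [Function.comp, id]
  rw [← mul_assoc, ← mul_pow, one_div, inv_mul_cancel_left₀ hb.ne', neg_mul]

lemma rInt {b : ℝ} (hb : 0 < b) (n : ℕ) :
    IntegrableOn (fun x : ℝ ↦ x ^ n * Real.exp (-b * x)) (Ioi 0) := by
  refine integrable_of_isBigO_exp_neg (half_pos hb) (by fun_prop) ?_
  rw [Asymptotics.isBigO_iff]
  refine ⟨1, ?_⟩
  have h := tpme (half_pos hb) n
  filter_upwards [h.eventually (eventually_le_nhds one_pos),
    eventually_ge_atTop (0:ℝ)] with x hx hx0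
  have : x ^ n * Real.exp (-b * x) = (x ^ n * Real.exp (-(b/2) * x)) * Real.exp (-(b/2) * x) := by
    rw [mul_assoc, ← Real.exp_add]; ring_nf
  rw [Real.norm_of_nonneg (by positivity), Real.norm_of_nonneg (Real.exp_pos _).le, this, one_mul]
  exact mul_le_of_le_one_left (Real.exp_pos _).le (by simpa using hx)

lemma cNorm (c : ℂ) (n : ℕ) {x : ℝ} (hx : 0 ≤ x) :
    ‖(x : ℂ) ^ n * Complex.exp (c * x)‖ = x ^ n * Real.exp (c.re * x) := by
  simp [Complex.norm_exp, abs_of_nonneg hx,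
    Complex.mul_re]

lemma cInt {c : ℂ} (hc : c.re < 0) (n : ℕ) :
    IntegrableOn (fun x : ℝ ↦ (x : ℂ) ^ n * Complex.exp (c * x)) (Ioi 0) := by
  refine (rInt (b := -c.re) (by linarith) n).mono'
    (Continuous.aestronglyMeasurable (by continuity)) ?_
  rw [ae_restrict_iff' measurableSet_Ioi]
  filter_upwards with x hx
  rw [cNorm c n (le_of_lt hx)]
  simp only [neg_mul, neg_neg, le_refl]

lemma tendsto_pow_cexp {c : ℂ} (hc : c.re < 0) (n : ℕ) :
    Tendsto (fun x : ℝ ↦ (x : ℂ) ^ n * Complex.exp (c * x)) atTop (𝓝 0) := by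
  rw [tendsto_zero_iff_norm_tendsto_zero]
  have h := tpme (b := -c.re) (by linarith) n
  refine h.congr' ?_
  filter_upwards [eventually_ge_atTop (0:ℝ)] with x hx
  rw [cNorm c n hx]
  simp only [neg_mul, neg_neg]

lemma laplace_pow {c : ℂ} (hc : c.re < 0) (n : ℕ) :
    ∫ x : ℝ in Ioi 0, (x : ℂ) ^ n * Complex.exp (c * x)
      = (Nat.factorial n : ℂ) / (-c) ^ (n + 1) := by
  have hc0 : c ≠ 0 := fun h => by simp [h] at hc
  induction n with
  | zero =>
    have hF : ∀ x ∈ Ioi (0:ℝ), HasDerivAt (fun x : ℝ ↦ Complex.exp (c * x) / c)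
        ((x:ℂ) ^ 0 * Complex.exp (c * x)) x := by
      intro x _
      have : HasDerivAt (fun z : ℂ ↦ Complex.exp (c * z) / c) (Complex.exp (c * x)) (x : ℂ) := by
        have h1 : HasDerivAt (fun z : ℂ ↦ Complex.exp (c * z)) (c * Complex.exp (c * x)) (x:ℂ) := by
          simpa [mul_comm] using ((hasDerivAt_id (x:ℂ)).const_mul c).cexp
        simpa [mul_div_assoc, mul_div_cancel_left₀ _ hc0] using h1.div_const c
      simpa using this.comp_ofReal
    have := integral_Ioi_of_hasDerivAt_of_tendsto (m := 0)
      (f := fun x : ℝ ↦ Complex.exp (c * x) / c)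
      (Continuous.continuousWithinAt (by continuity)) hF (cInt hc 0) ?_
    · rw [this]; simp [neg_div, div_neg]
    · have := (tendsto_pow_cexp hc 0).div_const c
      simpa using this
  | succ n ih =>
    have hF : ∀ x ∈ Ioi (0:ℝ), HasDerivAt (fun x : ℝ ↦ (x:ℂ) ^ (n+1) * Complex.exp (c * x))
        (((n:ℂ)+1) * ((x:ℂ) ^ n * Complex.exp (c * x)) + c * ((x:ℂ) ^ (n+1) * Complex.exp (c * x))) x := by
      intro x _
      have h1 : HasDerivAt (fun z : ℂ ↦ z ^ (n+1) * Complex.exp (c * z))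
          (((n:ℂ)+1) * (x:ℂ) ^ n * Complex.exp (c * x) + (x:ℂ) ^ (n+1) * (c * Complex.exp (c * x))) (x:ℂ) := by
        have hp : HasDerivAt (fun z : ℂ ↦ z ^ (n+1)) (((n:ℂ)+1) * (x:ℂ) ^ n) (x:ℂ) := by
          simpa using hasDerivAt_pow (n+1) (x:ℂ)
        have he : HasDerivAt (fun z : ℂ ↦ Complex.exp (c * z)) (c * Complex.exp (c * x)) (x:ℂ) := by
          simpa [mul_comm] using ((hasDerivAt_id (x:ℂ)).const_mul c).cexp
        exact hp.mul he
      have := h1.comp_ofReal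
      convert this using 1
      ring
    have hint : IntegrableOn (fun x : ℝ ↦
        ((n:ℂ)+1) * ((x:ℂ) ^ n * Complex.exp (c * x)) + c * ((x:ℂ) ^ (n+1) * Complex.exp (c * x))) (Ioi 0) :=
      ((cInt hc n).const_mul _).add ((cInt hc (n+1)).const_mul _)
    have key := integral_Ioi_of_hasDerivAt_of_tendsto
      (f := fun x : ℝ ↦ (x:ℂ) ^ (n+1) * Complex.exp (c * x))
      (Continuous.continuousWithinAt (by continuity)) hF hint
      (tendsto_pow_cexp hc (n+1))
    rw [integral_add ((cInt hc n).const_mul _) ((cInt hc (n+1)).const_mul _),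
      integral_const_mul, integral_const_mul, ih] at key
    simp only [Complex.ofReal_zero, ne_eq, zero_pow, Nat.succ_ne_zero, not_false_iff,
      zero_mul, Complex.exp_zero, mul_one, zero_sub, neg_zero] at key
    -- key : (n+1) * (n!/(-c)^(n+1)) + c * ∫ = -(0 ^ (n+1) * 1) = 0
    have h2 : c * ∫ x : ℝ in Ioi 0, (x:ℂ) ^ (n+1) * Complex.exp (c * x)
        = -(((n:ℂ)+1) * ((Nat.factorial n : ℂ) / (-c) ^ (n+1))) := by
      linear_combination key
    have hcn : (-c) ≠ 0 := neg_ne_zero.2 hc0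
    have hfac : (Nat.factorial (n+1) : ℂ) = ((n:ℂ)+1) * (Nat.factorial n : ℂ) := by
      push_cast [Nat.factorial_succ]; ring
    field_simp at h2
    rw [hfac, eq_div_iff (pow_ne_zero (n+2) hcn)]
    linear_combination (-1 : ℂ) * h2

lemma integrable_tsum'' {α : Type*} [MeasurableSpace α] {μ : Measure α}
    {F : ℕ → α → ℂ} (hF_int : ∀ i, Integrable (F i) μ)
    (hF_sum : Summable fun i ↦ ∫ a, ‖F i a‖ ∂μ) :
    Integrable (fun a ↦ ∑' i, F i a) μ := by
  have h1 : ∀ i, ∫⁻ a, ‖F i a‖₊ ∂μ = ENNReal.ofReal (∫ a, ‖F i a‖ ∂μ) := fun i =>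
    (ofReal_integral_norm_eq_lintegral_enorm (hF_int i)).symm
  have hf' : ∑' i, ∫⁻ a, ‖F i a‖₊ ∂μ ≠ ∞ := by
    simp_rw [h1]
    rw [← ENNReal.ofReal_tsum_of_nonneg (fun i => integral_nonneg fun a => norm_nonneg _) hF_sum]
    exact ENNReal.ofReal_ne_top
  have hmeas : ∀ i, AEStronglyMeasurable (F i) μ := fun i => (hF_int i).1
  have hf'' : ∀ i, AEMeasurable (fun x => (‖F i x‖₊ : ℝ≥0∞)) μ := fun i => AEStronglyMeasurable.enorm (hmeas i)
  have hhh : ∀ᵐ a ∂μ, Summable fun n => ‖F n a‖ := by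
    have hlt : ∫⁻ a, ∑' i, (‖F i a‖₊ : ℝ≥0∞) ∂μ ≠ ∞ := by rw [lintegral_tsum hf'']; exact hf'
    refine (ae_lt_top' (AEMeasurable.ennreal_tsum hf'') hlt).mono fun a ha => ?_
    have hs := ENNReal.tsum_coe_ne_top_iff_summable.1 ha.ne
    have := NNReal.summable_coe.2 hs
    simpa [coe_nnnorm] using this
  have hsm : AEStronglyMeasurable (fun a ↦ ∑' i, F i a) μ := by
    refine aestronglyMeasurable_of_tendsto_ae atTop
      (f := fun n a => ∑ i ∈ Finset.range n, F i a)
      (fun n => Finset.aestronglyMeasurable_fun_sum _ fun i _ => hmeas i) ?_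
    filter_upwards [hhh] with a ha
    exact ha.of_norm.hasSum.tendsto_sum_nat
  refine ⟨hsm, ?_⟩
  have hb : ∫⁻ a, ‖∑' i, F i a‖₊ ∂μ ≤ ∑' i, ∫⁻ a, ‖F i a‖₊ ∂μ := by
    rw [← lintegral_tsum hf'']
    refine lintegral_mono_ae ?_
    filter_upwards [hhh] with a ha
    calc (‖∑' i, F i a‖₊ : ℝ≥0∞) = ENNReal.ofReal ‖∑' i, F i a‖ := by
          exact (ofReal_norm _).symm
      _ ≤ ENNReal.ofReal (∑' i, ‖F i a‖) := ENNReal.ofReal_le_ofReal (norm_tsum_le_tsum_norm ha)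
      _ = ∑' i, (‖F i a‖₊ : ℝ≥0∞) := by
          rw [ENNReal.ofReal_tsum_of_nonneg (fun i => norm_nonneg _) ha]
          simp_rw [ofReal_norm]; rfl
  exact lt_of_le_of_lt hb hf'.lt_top

lemma rLaplace {b : ℝ} (hb : 0 < b) (n : ℕ) :
    ∫ x : ℝ in Ioi 0, x ^ n * Real.exp (-b * x) = (Nat.factorial n : ℝ) / b ^ (n + 1) := by
  have hre : ((-b : ℝ) : ℂ).re < 0 := by simpa using hb
  have key : (∫ x : ℝ in Ioi 0, ((x ^ n * Real.exp (-b * x) : ℝ) : ℂ))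
      = (((Nat.factorial n : ℝ) / b ^ (n + 1) : ℝ) : ℂ) := by
    calc (∫ x : ℝ in Ioi 0, ((x ^ n * Real.exp (-b * x) : ℝ) : ℂ))
        = ∫ x : ℝ in Ioi 0, (x : ℂ) ^ n * Complex.exp (((-b : ℝ) : ℂ) * x) := by
          refine setIntegral_congr_fun measurableSet_Ioi fun x _ => ?_
          push_cast [Complex.ofReal_exp]
          ring_nf
      _ = (Nat.factorial n : ℂ) / (-((-b : ℝ) : ℂ)) ^ (n + 1) := laplace_pow hre n
      _ = (((Nat.factorial n : ℝ) / b ^ (n + 1) : ℝ) : ℂ) := by push_cast; ring_nf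
  have h0 : (∫ x : ℝ in Ioi 0, ((x ^ n * Real.exp (-b * x) : ℝ) : ℂ))
      = ((∫ x : ℝ in Ioi 0, x ^ n * Real.exp (-b * x) : ℝ) : ℂ) := integral_ofReal
  rw [h0] at key
  exact_mod_cast key

lemma sumS (t : ℝ) :
    Summable (fun k : ℕ ↦ t ^ k / (Nat.factorial k * Nat.factorial (k + 1))) := by
  refine Summable.of_norm ?_
  refine Summable.of_nonneg_of_le (fun k => norm_nonneg _) (fun k => ?_)
    (Real.summable_pow_div_factorial |t|)
  rw [Real.norm_eq_abs, abs_div, abs_pow, abs_of_nonneg (by positivity :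
    (0:ℝ) ≤ (Nat.factorial k * Nat.factorial (k+1) : ℝ))]
  rw [div_le_div_iff₀ (by positivity) (by positivity)]
  have h1 : (1:ℝ) ≤ (Nat.factorial (k+1) : ℝ) := by
    exact_mod_cast Nat.one_le_iff_ne_zero.2 (Nat.factorial_ne_zero _)
  have h2 : (0:ℝ) ≤ |t| ^ k * (Nat.factorial k : ℝ) := by positivity
  nlinarith [h2, h1]


lemma measS : Measurable (fun t : ℝ ↦ ∑' k : ℕ,
    t ^ k / (Nat.factorial k * Nat.factorial (k + 1))) := by
  refine measurable_of_tendsto_metrizable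
    (g := fun t : ℝ ↦ ∑' k : ℕ, t ^ k / (Nat.factorial k * Nat.factorial (k + 1)))
    (f := fun (n : ℕ) (t : ℝ) => ∑ k ∈ Finset.range n, t ^ k / (Nat.factorial k * Nat.factorial (k + 1)))
    (fun n => by fun_prop) ?_
  rw [tendsto_pi_nhds]
  intro t
  exact (sumS t).hasSum.tendsto_sum_nat

lemma meas_besselI1 : Measurable besselI1 := by
  have : besselI1 = fun r : ℝ =>
      (r / 2) * (fun t : ℝ ↦ ∑' k : ℕ, t ^ k / (Nat.factorial k * Nat.factorial (k + 1)))
        (r ^ 2 / 4) := rfl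
  rw [this]
  exact (measurable_id.div_const 2).mul (measS.comp ((measurable_id.pow_const 2).div_const 4))

lemma meas_density (α β : ℝ) : Measurable (fun x : ℝ =>
    β * Real.exp (-α - β * x) * Real.sqrt (α / (β * x)) *
      besselI1 (2 * Real.sqrt (α * β * x))) := by
  have h1 : Measurable fun x : ℝ => β * Real.exp (-α - β * x) := by fun_prop
  have h2 : Measurable fun x : ℝ => Real.sqrt (α / (β * x)) := by
    exact Real.continuous_sqrt.measurable.comp (measurable_const.div (by fun_prop))
  have h3 : Measurable fun x : ℝ => besselI1 (2 * Real.sqrt (α * β * x)) := by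
    exact meas_besselI1.comp (by fun_prop)
  exact (h1.mul h2).mul h3


lemma density_eq {α β x : ℝ} (hα : 0 < α) (hβ : 0 < β) (hx : 0 < x) :
    β * Real.exp (-α - β * x) * Real.sqrt (α / (β * x)) * besselI1 (2 * Real.sqrt (α * β * x))
    = α * β * Real.exp (-α) * Real.exp (-β * x) *
        ∑' k : ℕ, (α * β * x) ^ k / (Nat.factorial k * Nat.factorial (k + 1)) := by
  have ht : (0:ℝ) ≤ α * β * x := by positivity
  have h1 : besselI1 (2 * Real.sqrt (α * β * x))
      = Real.sqrt (α * β * x) *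
        ∑' k : ℕ, (α * β * x) ^ k / (Nat.factorial k * Nat.factorial (k + 1)) := by
    rw [besselI1]
    have h : (2 * Real.sqrt (α * β * x)) ^ 2 / 4 = α * β * x := by
      rw [mul_pow, Real.sq_sqrt ht]; ring
    rw [h]; ring
  have h2 : Real.sqrt (α / (β * x)) * Real.sqrt (α * β * x) = α := by
    rw [← Real.sqrt_mul (by positivity) ]
    have h : α / (β * x) * (α * β * x) = α ^ 2 := by field_simp
    rw [h, Real.sqrt_sq hα.le]
  have h3 : Real.exp (-α - β * x) = Real.exp (-α) * Real.exp (-β * x) := by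
    rw [← Real.exp_add]; ring_nf
  rw [h1, h3]
  linear_combination (β * Real.exp (-α) * Real.exp (-β * x) *
    ∑' k : ℕ, (α * β * x) ^ k / (Nat.factorial k * Nat.factorial (k + 1))) * h2

noncomputable def bdens (α β : ℝ) (x : ℝ) : ℝ :=
  β * Real.exp (-α - β * x) * Real.sqrt (α / (β * x)) * besselI1 (2 * Real.sqrt (α * β * x))

lemma besselMeasure_eq (α β : ℝ) : besselMeasure α β
    = (ENNReal.ofReal (Real.exp (-α)) • Measure.dirac (0:ℝ)) +
      (volume.restrict (Set.Ioi (0:ℝ))).withDensity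
        (fun x => (((bdens α β x).toNNReal : ℝ≥0) : ℝ≥0∞)) := rfl

noncomputable def Ck (α β : ℝ) (k : ℕ) : ℝ :=
  α * β * Real.exp (-α) * ((α * β) ^ k / (Nat.factorial k * Nat.factorial (k + 1)))

noncomputable def Fk (α β : ℝ) (u : ℂ) (k : ℕ) : ℝ → ℂ :=
  fun x => (Ck α β k) • ((x : ℂ) ^ k * Complex.exp ((u - β) * x))

/-- For `Re u ≤ 0`, the transform of the Bessel distribution is
`∫ e^{ux} μ_{α,β}(dx) = exp(αu/(β-u))`. -/
theorem bessel_transform (α β : ℝ) (hα : 0 < α) (hβ : 0 < β)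
    (u : ℂ) (hu : u.re ≤ 0) :
    ∫ x : ℝ, Complex.exp (u * x) ∂(besselMeasure α β) =
      Complex.exp ((α : ℂ) * u / ((β : ℂ) - u)) := by
  have hu' : (u - (β : ℂ)).re < 0 := by
    simp only [Complex.sub_re, Complex.ofReal_re]; linarith
  have hβu : (β : ℂ) - u ≠ 0 := by
    intro h
    have h2 : ((β : ℂ) - u).re = 0 := by rw [h]; simp
    simp only [Complex.sub_re, Complex.ofReal_re] at h2
    linarith
  set w : ℂ := (α : ℂ) * (β : ℂ) / ((β : ℂ) - u) with hw
  have hCpos : ∀ k, 0 ≤ Ck α β k := fun k => by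
    rw [Ck]; positivity
  have hFint : ∀ k, Integrable (Fk α β u k) (volume.restrict (Ioi 0)) := fun k =>
    ((cInt hu' k).smul (Ck α β k))
  have hnorm : ∀ k, ∀ x : ℝ, 0 < x →
      ‖Fk α β u k x‖ = Ck α β k * (x ^ k * Real.exp ((u.re - β) * x)) := by
    intro k x hx
    rw [Fk]
    simp only [norm_smul, Real.norm_eq_abs, abs_of_nonneg (hCpos k)]
    rw [cNorm (u - β) k hx.le]
    simp [Complex.sub_re]
  have hIntNorm : ∀ k, ∫ x in Ioi (0:ℝ), ‖Fk α β u k x‖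
      ≤ Real.exp (-α) * α * (α ^ k / Nat.factorial k) := by
    intro k
    have hle : ∫ x in Ioi (0:ℝ), ‖Fk α β u k x‖
        ≤ ∫ x in Ioi (0:ℝ), Ck α β k * (x ^ k * Real.exp (-β * x)) := by
      refine setIntegral_mono_on (hFint k).norm
        (((rInt hβ k).const_mul (Ck α β k)).congr
          (Filter.Eventually.of_forall fun x => by ring)) measurableSet_Ioi ?_
      intro x hx
      have hx0 : (0:ℝ) < x := hx
      rw [hnorm k x hx0]
      have h1 : Real.exp ((u.re - β) * x) ≤ Real.exp (-β * x) := by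
        apply Real.exp_le_exp.2
        nlinarith
      have hxk : (0:ℝ) ≤ x ^ k := by positivity
      have h2 := mul_le_mul_of_nonneg_left h1 hxk
      exact mul_le_mul_of_nonneg_left h2 (hCpos k)
    have heq : ∫ x in Ioi (0:ℝ), Ck α β k * (x ^ k * Real.exp (-β * x))
        = Ck α β k * ((Nat.factorial k : ℝ) / β ^ (k+1)) := by
      rw [integral_const_mul, rLaplace hβ k]
    have hfin : Ck α β k * ((Nat.factorial k : ℝ) / β ^ (k+1))
        ≤ Real.exp (-α) * α * (α ^ k / Nat.factorial k) := by
      rw [Ck]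
      have hfk : (0:ℝ) < Nat.factorial k := by exact_mod_cast Nat.factorial_pos k
      have hfk1 : (Nat.factorial k : ℝ) ≤ (Nat.factorial (k+1) : ℝ) := by
        exact_mod_cast Nat.factorial_le (Nat.le_succ k)
      have hfk1' : (0:ℝ) < Nat.factorial (k+1) := by exact_mod_cast Nat.factorial_pos (k+1)
      have key : α * β * Real.exp (-α) * ((α * β) ^ k / (Nat.factorial k * Nat.factorial (k + 1)))
          * ((Nat.factorial k : ℝ) / β ^ (k+1))
          = Real.exp (-α) * α * (α ^ k / Nat.factorial (k+1)) := by
        field_simp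
        rw [mul_pow]
        ring
      rw [key]
      gcongr
    calc ∫ x in Ioi (0:ℝ), ‖Fk α β u k x‖ ≤ _ := hle
      _ = _ := heq
      _ ≤ _ := hfin
  have hSummable : Summable (fun k => ∫ x in Ioi (0:ℝ), ‖Fk α β u k x‖) :=
    Summable.of_nonneg_of_le (fun k => integral_nonneg fun x => norm_nonneg _)
      (fun k => hIntNorm k) ((Real.summable_pow_div_factorial α).mul_left _)
  -- pointwise identity
  have hptS : ∀ x ∈ Ioi (0:ℝ),
      ((bdens α β x).toNNReal : ℝ≥0) • Complex.exp (u * x) = ∑' k, Fk α β u k x := by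
    intro x hx
    have hx0 : (0:ℝ) < x := hx
    have hdx : bdens α β x = α * β * Real.exp (-α) * Real.exp (-β * x) *
        ∑' k : ℕ, (α * β * x) ^ k / (Nat.factorial k * Nat.factorial (k + 1)) :=
      density_eq hα hβ hx0
    have hdnn : 0 ≤ bdens α β x := by
      rw [hdx]
      have hS : 0 ≤ ∑' k : ℕ, (α * β * x) ^ k / (Nat.factorial k * Nat.factorial (k + 1)) :=
        tsum_nonneg fun k => by positivity
      positivity
    rw [NNReal.smul_def, Real.coe_toNNReal _ hdnn, Complex.real_smul]
    have hFkx : ∀ k, Fk α β u k x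
        = ((Ck α β k * x ^ k * Real.exp (-β * x) : ℝ) : ℂ) * Complex.exp (u * x) := by
      intro k
      rw [Fk]
      rw [Complex.real_smul]
      have hexp : Complex.exp ((u - β) * x)
          = Complex.exp (u * x) * Complex.exp (((-β * x : ℝ) : ℂ)) := by
        rw [← Complex.exp_add]
        congr 1
        push_cast
        ring
      rw [hexp, ← Complex.ofReal_exp]
      push_cast
      ring
    have hstep : (bdens α β x : ℝ) = ∑' k, Ck α β k * x ^ k * Real.exp (-β * x) := by
      rw [hdx]
      calc α * β * Real.exp (-α) * Real.exp (-β * x) *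
            ∑' k : ℕ, (α * β * x) ^ k / (Nat.factorial k * Nat.factorial (k + 1))
          = ∑' k : ℕ, (α * β * Real.exp (-α) * Real.exp (-β * x)) *
              ((α * β * x) ^ k / (Nat.factorial k * Nat.factorial (k + 1))) :=
            _root_.tsum_mul_left.symm
        _ = ∑' k, Ck α β k * x ^ k * Real.exp (-β * x) := by
            refine tsum_congr fun k => ?_
            rw [Ck, mul_pow]
            ring
    rw [hstep, Complex.ofReal_tsum, ← _root_.tsum_mul_right]
    exact tsum_congr fun k => (hFkx k).symm
  -- dirac part
  have hInt1 : Integrable (fun x : ℝ => Complex.exp (u * x))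
      (ENNReal.ofReal (Real.exp (-α)) • Measure.dirac (0:ℝ)) := by
    refine Integrable.smul_measure ?_ ENNReal.ofReal_ne_top
    refine ⟨Continuous.aestronglyMeasurable (by continuity), ?_⟩
    simp [HasFiniteIntegral, lintegral_dirac]
  have hdirac : ∫ x : ℝ, Complex.exp (u * x)
      ∂(ENNReal.ofReal (Real.exp (-α)) • Measure.dirac (0:ℝ))
      = ((Real.exp (-α) : ℝ) : ℂ) := by
    rw [integral_smul_measure, integral_dirac]
    simp [ENNReal.toReal_ofReal (Real.exp_nonneg _), Complex.real_smul]
  have hmeasd : Measurable (fun x : ℝ => (bdens α β x).toNNReal) :=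
    (meas_density α β).real_toNNReal
  -- withDensity part
  have hintF : ∀ k, ∫ x in Ioi (0:ℝ), Fk α β u k x
      = (Ck α β k) • ((Nat.factorial k : ℂ) / ((β:ℂ) - u) ^ (k+1)) := by
    intro k
    simp only [Fk]
    rw [integral_smul, laplace_pow hu' k, neg_sub]
  have hterm : ∀ k, (Ck α β k) • ((Nat.factorial k : ℂ) / ((β:ℂ) - u) ^ (k+1))
      = ((Real.exp (-α) : ℝ) : ℂ) * (w ^ (k+1) / (Nat.factorial (k+1) : ℂ)) := by
    intro k
    rw [Complex.real_smul, Ck, hw]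
    have hfk : (Nat.factorial k : ℂ) ≠ 0 := by exact_mod_cast Nat.factorial_ne_zero k
    have hfk1 : (Nat.factorial (k+1) : ℂ) ≠ 0 := by exact_mod_cast Nat.factorial_ne_zero (k+1)
    push_cast
    rw [div_pow]
    field_simp
    ring
  have hsum2 : ∑' k : ℕ, ((Real.exp (-α) : ℝ) : ℂ) * (w ^ (k+1) / (Nat.factorial (k+1) : ℂ))
      = ((Real.exp (-α) : ℝ) : ℂ) * (Complex.exp w - 1) := by
    rw [_root_.tsum_mul_left]
    congr 1
    have hs : Summable (fun n : ℕ => w ^ n / (Nat.factorial n : ℂ)) :=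
      NormedSpace.expSeries_div_summable w
    have h0 := hs.tsum_eq_zero_add
    have hexp : Complex.exp w = ∑' n : ℕ, w ^ n / (Nat.factorial n : ℂ) := by
      rw [Complex.exp_eq_exp_ℂ, NormedSpace.exp_eq_tsum_div]
    rw [hexp, h0]
    simp
  have hν : ∫ x : ℝ, Complex.exp (u * x)
      ∂((volume.restrict (Ioi (0:ℝ))).withDensity
        (fun x => (((bdens α β x).toNNReal : ℝ≥0) : ℝ≥0∞)))
      = ((Real.exp (-α) : ℝ) : ℂ) * (Complex.exp w - 1) := by
    rw [integral_withDensity_eq_integral_smul hmeasd]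
    rw [setIntegral_congr_fun measurableSet_Ioi hptS]
    rw [← integral_tsum_of_summable_integral_norm hFint hSummable]
    rw [tsum_congr fun k => (hintF k).trans (hterm k)]
    exact hsum2
  have hInt2 : Integrable (fun x : ℝ => Complex.exp (u * x))
      ((volume.restrict (Ioi (0:ℝ))).withDensity
        (fun x => (((bdens α β x).toNNReal : ℝ≥0) : ℝ≥0∞))) := by
    rw [integrable_withDensity_iff_integrable_smul hmeasd]
    refine (integrable_tsum'' hFint hSummable).congr ?_
    filter_upwards [ae_restrict_mem measurableSet_Ioi] with x hx
    exact (hptS x hx).symm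
  rw [besselMeasure_eq, integral_add_measure hInt1 hInt2, hdirac, hν]
  have he : ((Real.exp (-α) : ℝ) : ℂ) = Complex.exp (-(α:ℂ)) := by
    rw [Complex.ofReal_exp]; push_cast; ring_nf
  calc ((Real.exp (-α) : ℝ) : ℂ) + ((Real.exp (-α) : ℝ) : ℂ) * (Complex.exp w - 1)
      = ((Real.exp (-α) : ℝ) : ℂ) * Complex.exp w := by ring
    _ = Complex.exp (-(α:ℂ)) * Complex.exp w := by rw [he]
    _ = Complex.exp (-(α:ℂ) + w) := (Complex.exp_add _ _).symm
    _ = Complex.exp ((α : ℂ) * u / ((β : ℂ) - u)) := by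
        congr 1
        rw [hw]
        field_simp
        ring
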